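/- Let G be a discrete group, I a nonempty set, S = B(I,G) the Brandt semigroup, and T = I×G×I. Then the Banach algebra ℓ¹(S) is topologically isomorphic to the Banach algebra ℓ¹(T) ⊕ ℂ with coordinatewise multiplication. -/

import Mathlib

open scoped TensorProduct BigOperators ENNReal
open Filter

noncomputable section

/-- `ℓ¹(X)`: the Banach space of absolutely summable complex functions on `X`. -/
abbrev L1 (X : Type) : Type := lp (fun _ : X => ℂ) 1

open Classical in
/-- The point mass `δ_x` in `ℓ¹(X)`. -/
noncomputable def delta {X : Type} (x : X) : L1 X := lp.single 1 x (1 : ℂ)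

/-- The Brandt semigroup `B(I,G) = (I × G × I) ∪ {∘}`, with `∘ = none`. -/
abbrev Brandt (I G : Type) : Type := Option (I × G × I)

open Classical in
/-- Multiplication of the Brandt semigroup: `(i,g,j)(i',g',j') = (i,gg',j')` if
`j = i'` and `∘` otherwise; `∘` is absorbing. -/
noncomputable instance {I G : Type} [Mul G] : Mul (Brandt I G) :=
  ⟨fun a b => match a, b with
    | some (i, g, j), some (i', g', j') => if j = i' then some (i, g * g', j') else none
    | _, _ => none⟩

open Classical in
/-- The convolution product on `ℓ¹(S)` for a (semi)group `S`:
`(a * b)(s) = ∑_{uv = s} a(u) b(v)`. -/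
noncomputable def l1conv {S : Type} [Mul S] (a b : L1 S) (s : S) : ℂ :=
  ∑' p : S × S, if p.1 * p.2 = s then a p.1 * b p.2 else 0

namespace BrandtAux

open Function

variable {U V X : Type}

lemma l1_summable (a : L1 U) : Summable fun x => ‖a x‖ := by
  have h1 : (0:ℝ) < (1 : ℝ≥0∞).toReal := by norm_num
  simpa using (memℓp_gen_iff h1).1 (lp.memℓp a)

lemma l1_norm (a : L1 U) : ‖a‖ = ∑' x, ‖a x‖ := by
  have h1 : (0:ℝ) < (1 : ℝ≥0∞).toReal := by norm_num
  simpa using lp.norm_eq_tsum_rpow h1 a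

lemma memℓp_of_summable {f : U → ℂ} (h : Summable fun x => ‖f x‖) :
    Memℓp f (1 : ℝ≥0∞) := by
  apply memℓp_gen
  simpa using h

lemma l1_summable' (a : L1 U) : Summable fun x => a x := (l1_summable a).of_norm

open Classical

variable (μ : U → U → Option U)

def cf (a b : L1 U) (u : U) : ℂ :=
  ∑' p : U × U, if μ p.1 p.2 = some u then a p.1 * b p.2 else 0

lemma summable_pair (a b : L1 U) : Summable fun p : U × U => ‖a p.1‖ * ‖b p.2‖ :=
  (l1_summable a).mul_of_nonneg (l1_summable b) (fun _ => norm_nonneg _) fun _ => norm_nonneg _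

lemma summable_pair' (a b : L1 U) : Summable fun p : U × U => a p.1 * b p.2 :=
  Summable.of_norm ((summable_pair a b).congr fun p => (norm_mul _ _).symm)

lemma tsum_pair' (a b : L1 U) :
    ∑' p : U × U, a p.1 * b p.2 = (∑' x, a x) * ∑' x, b x := by
  rw [(summable_pair' a b).tsum_prod' fun x => (summable_pair' a b).prod_factor x]
  rw [← Summable.tsum_mul_right _ (l1_summable' a)]
  exact tsum_congr fun i => Summable.tsum_mul_left (a i) (l1_summable' b)

lemma tsum_pair (a b : L1 U) : ∑' p : U × U, ‖a p.1‖ * ‖b p.2‖ = ‖a‖ * ‖b‖ := by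
  rw [(summable_pair a b).tsum_prod' fun x => (summable_pair a b).prod_factor x,
    l1_norm a, l1_norm b, ← Summable.tsum_mul_right _ (l1_summable a)]
  exact tsum_congr fun i => Summable.tsum_mul_left ‖a i‖ (l1_summable b)

lemma summable_ite (a b : L1 U) (u : U) :
    Summable fun p : U × U => if μ p.1 p.2 = some u then a p.1 * b p.2 else 0 := by
  apply Summable.of_norm
  refine Summable.of_nonneg_of_le (fun _ => norm_nonneg _) (fun p => ?_) (summable_pair a b)
  split
  · exact le_of_eq (norm_mul _ _)
  · simp only [norm_zero]
    positivity

lemma summable_iten (a b : L1 U) (u : U) :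
    Summable fun p : U × U => if μ p.1 p.2 = some u then ‖a p.1‖ * ‖b p.2‖ else 0 := by
  refine Summable.of_nonneg_of_le (fun p => ?_) (fun p => ?_) (summable_pair a b)
  · split
    · positivity
    · exact le_refl 0
  · split
    · exact le_refl _
    · positivity

def bf (a b : L1 U) (u : U) : ℝ :=
  ∑' p : U × U, if μ p.1 p.2 = some u then ‖a p.1‖ * ‖b p.2‖ else 0

lemma bf_nonneg (a b : L1 U) (u : U) : 0 ≤ bf μ a b u := by
  refine tsum_nonneg fun p => ?_
  split
  · positivity
  · exact le_refl 0

lemma norm_cf_le (a b : L1 U) (u : U) : ‖cf μ a b u‖ ≤ bf μ a b u := by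
  have key : ∀ p : U × U, ‖if μ p.1 p.2 = some u then a p.1 * b p.2 else 0‖ =
      (if μ p.1 p.2 = some u then ‖a p.1‖ * ‖b p.2‖ else 0) := by
    intro p; split <;> simp [norm_mul]
  have h2 : Summable fun p : U × U => ‖if μ p.1 p.2 = some u then a p.1 * b p.2 else 0‖ :=
    (summable_iten μ a b u).congr fun p => (key p).symm
  exact (norm_tsum_le_tsum_norm h2).trans_eq (tsum_congr key)

lemma sum_bf_le (a b : L1 U) (s : Finset U) : ∑ u ∈ s, bf μ a b u ≤ ‖a‖ * ‖b‖ := by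
  rw [← tsum_pair a b]
  simp only [bf]
  rw [← Summable.tsum_finsetSum (fun u _ => summable_iten μ a b u)]
  refine Summable.tsum_le_tsum (fun p => ?_) ?_ (summable_pair a b)
  · rcases h : μ p.1 p.2 with _ | u₀
    · simp only [h, reduceCtorEq, if_false, Finset.sum_const_zero]
      positivity
    · simp only [h, Option.some_inj]
      rw [Finset.sum_ite_eq s u₀ fun _ => ‖a p.1‖ * ‖b p.2‖]
      split
      · exact le_refl _
      · positivity
  · exact summable_sum fun u _ => summable_iten μ a b u

lemma summable_bf (a b : L1 U) : Summable (bf μ a b) :=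
  summable_of_sum_le (fun u => bf_nonneg μ a b u) (sum_bf_le μ a b)

lemma tsum_bf_le (a b : L1 U) : ∑' u, bf μ a b u ≤ ‖a‖ * ‖b‖ :=
  (summable_bf μ a b).tsum_le_of_sum_le (sum_bf_le μ a b)

lemma summable_norm_cf (a b : L1 U) : Summable fun u => ‖cf μ a b u‖ :=
  Summable.of_nonneg_of_le (fun _ => norm_nonneg _) (norm_cf_le μ a b) (summable_bf μ a b)

def convL1 (a b : L1 U) : L1 U := ⟨cf μ a b, memℓp_of_summable (summable_norm_cf μ a b)⟩

lemma convL1_apply (a b : L1 U) (u : U) : convL1 μ a b u = cf μ a b u := rfl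

lemma norm_convL1_le (a b : L1 U) : ‖convL1 μ a b‖ ≤ ‖a‖ * ‖b‖ := by
  rw [l1_norm]
  exact le_trans (Summable.tsum_le_tsum (norm_cf_le μ a b) (summable_norm_cf μ a b) (summable_bf μ a b))
    (tsum_bf_le μ a b)

lemma cf_add_left (a a' b : L1 U) (u : U) :
    cf μ (a + a') b u = cf μ a b u + cf μ a' b u := by
  rw [cf, cf, cf, ← Summable.tsum_add (summable_ite μ a b u) (summable_ite μ a' b u)]
  refine tsum_congr fun p => ?_
  simp only [lp.coeFn_add, Pi.add_apply]
  split <;> ring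

lemma cf_add_right (a b b' : L1 U) (u : U) :
    cf μ a (b + b') u = cf μ a b u + cf μ a b' u := by
  rw [cf, cf, cf, ← Summable.tsum_add (summable_ite μ a b u) (summable_ite μ a b' u)]
  refine tsum_congr fun p => ?_
  simp only [lp.coeFn_add, Pi.add_apply]
  split <;> ring

lemma cf_smul_left (c : ℂ) (a b : L1 U) (u : U) :
    cf μ (c • a) b u = c * cf μ a b u := by
  rw [cf, cf, ← Summable.tsum_mul_left c (summable_ite μ a b u)]
  refine tsum_congr fun p => ?_
  simp only [lp.coeFn_smul, Pi.smul_apply, smul_eq_mul]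
  split <;> ring

lemma cf_smul_right (c : ℂ) (a b : L1 U) (u : U) :
    cf μ a (c • b) u = c * cf μ a b u := by
  rw [cf, cf, ← Summable.tsum_mul_left c (summable_ite μ a b u)]
  refine tsum_congr fun p => ?_
  simp only [lp.coeFn_smul, Pi.smul_apply, smul_eq_mul]
  split <;> ring

def convLM : L1 U →ₗ[ℂ] L1 U →ₗ[ℂ] L1 U where
  toFun a :=
    { toFun := fun b => convL1 μ a b
      map_add' := fun b b' => lp.ext (funext fun u => by
        simp only [lp.coeFn_add, Pi.add_apply, convL1_apply]
        exact cf_add_right μ a b b' u)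
      map_smul' := fun c b => lp.ext (funext fun u => by
        simp only [lp.coeFn_smul, Pi.smul_apply, smul_eq_mul, RingHom.id_apply, convL1_apply]
        exact cf_smul_right μ c a b u) }
  map_add' a a' := LinearMap.ext fun b => lp.ext (funext fun u => by
    simp only [LinearMap.coe_mk, AddHom.coe_mk, LinearMap.add_apply, lp.coeFn_add,
      Pi.add_apply, convL1_apply]
    exact cf_add_left μ a a' b u)
  map_smul' c a := LinearMap.ext fun b => lp.ext (funext fun u => by
    simp only [LinearMap.coe_mk, AddHom.coe_mk, RingHom.id_apply, LinearMap.smul_apply,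
      lp.coeFn_smul, Pi.smul_apply, smul_eq_mul, convL1_apply]
    exact cf_smul_left μ c a b u)

def convCLM : L1 U →L[ℂ] L1 U →L[ℂ] L1 U :=
  LinearMap.mkContinuous₂ (convLM μ) 1 fun a b => by
    show ‖convL1 μ a b‖ ≤ 1 * ‖a‖ * ‖b‖
    simpa using norm_convL1_le μ a b

lemma convCLM_apply (a b : L1 U) (u : U) : convCLM μ a b u = cf μ a b u := rfl


lemma supp_sub {Y Z : Type} {M : Type} [Zero M] {f : Y → M} {g : Z → Y}
    (h : ∀ y ∉ Set.range g, f y = 0) : Function.support f ⊆ Set.range g := by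
  intro y hy
  by_contra hc
  exact hy (h y hc)

lemma cf_reindex' (a b : L1 U) (u : U) (ψ : V → U × U) (hinj : Injective ψ)
    (h2 : ∀ p : U × U, μ p.1 p.2 = some u → p ∈ Set.range ψ) :
    cf μ a b u = ∑' v, if μ (ψ v).1 (ψ v).2 = some u then a (ψ v).1 * b (ψ v).2 else 0 := by
  rw [cf]
  refine (Function.Injective.tsum_eq hinj
    (f := fun p : U × U => if μ p.1 p.2 = some u then a p.1 * b p.2 else 0) ?_).symm
  intro p hp
  by_cases hc : μ p.1 p.2 = some u
  · exact h2 p hc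
  · exact absurd (if_neg hc) hp

lemma cf_reindex (a b : L1 U) (u : U) (ψ : V → U × U) (hinj : Injective ψ)
    (h1 : ∀ v, μ (ψ v).1 (ψ v).2 = some u)
    (h2 : ∀ p : U × U, μ p.1 p.2 = some u → p ∈ Set.range ψ) :
    cf μ a b u = ∑' v, a (ψ v).1 * b (ψ v).2 := by
  rw [cf_reindex' μ a b u ψ hinj h2]
  exact tsum_congr fun v => if_pos (h1 v)

lemma tsum_cf (m : U × U → U) (hm : ∀ p : U × U, μ p.1 p.2 = some (m p)) (a b : L1 U) :
    ∑' u, cf μ a b u = (∑' x, a x) * ∑' x, b x := by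
  set K : U × (U × U) → ℂ :=
    fun z => if μ z.2.1 z.2.2 = some z.1 then a z.2.1 * b z.2.2 else 0 with hKdef
  set j : U × U → U × (U × U) := fun p => (m p, p) with hjdef
  have hjinj : Injective j := fun p q h => congrArg Prod.snd h
  have hrange : ∀ z, z ∉ Set.range j → K z = 0 := by
    intro z hz
    by_cases hc : μ z.2.1 z.2.2 = some z.1
    · exfalso
      apply hz
      refine ⟨z.2, ?_⟩
      have : m z.2 = z.1 := by
        have := hm z.2
        rw [hc] at this
        exact (Option.some_inj.mp this).symm
      rw [hjdef]
      simp [this]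
    · exact if_neg hc
  have hKj : ∀ p : U × U, K (j p) = a p.1 * b p.2 := by
    intro p
    simp only [hKdef, hjdef]
    exact if_pos (hm p)
  have hK : Summable K := by
    rw [← Function.Injective.summable_iff hjinj hrange]
    exact (summable_pair' a b).congr fun p => (hKj p).symm
  calc ∑' u, cf μ a b u = ∑' z, K z := by
        rw [hK.tsum_prod' fun u => hK.prod_factor u]
        exact tsum_congr fun u => rfl
    _ = ∑' p : U × U, K (j p) := (Function.Injective.tsum_eq hjinj (supp_sub hrange)).symm
    _ = ∑' p : U × U, a p.1 * b p.2 := tsum_congr hKj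
    _ = (∑' x, a x) * ∑' x, b x := tsum_pair' a b

/-! Option machinery -/

lemma delta_apply (x y : X) : (delta x : L1 X) y = if y = x then 1 else 0 := by
  by_cases h : y = x
  · subst h
    simp [delta, lp.single_apply_self]
  · simp [delta, lp.single_apply_ne _ _ _ h, h]

lemma tsum_delta (x : X) : ∑' y, (delta x : L1 X) y = 1 := by
  rw [tsum_congr (fun y => delta_apply x y)]
  exact tsum_ite_eq x 1

def phiLM : L1 X →ₗ[ℂ] ℂ where
  toFun a := ∑' x, a x
  map_add' a b := by
    simp only [lp.coeFn_add, Pi.add_apply]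
    exact Summable.tsum_add (l1_summable' a) (l1_summable' b)
  map_smul' c a := by
    simp only [lp.coeFn_smul, Pi.smul_apply, smul_eq_mul, RingHom.id_apply]
    exact Summable.tsum_mul_left c (l1_summable' a)

def phiCLM : L1 X →L[ℂ] ℂ :=
  LinearMap.mkContinuous phiLM 1 fun a => by
    show ‖∑' x, a x‖ ≤ 1 * ‖a‖
    simpa using (norm_tsum_le_tsum_norm (l1_summable a)).trans_eq (l1_norm a).symm

lemma phiCLM_apply (a : L1 X) : phiCLM a = ∑' x, a x := rfl

def restr (a : L1 (Option X)) : L1 X :=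
  ⟨fun t => a (some t),
    memℓp_of_summable ((l1_summable a).comp_injective (Option.some_injective X))⟩

lemma restr_apply (a : L1 (Option X)) (t : X) : restr a t = a (some t) := rfl

lemma norm_restr_le (a : L1 (Option X)) : ‖restr a‖ ≤ ‖a‖ := by
  rw [l1_norm, l1_norm]
  exact Summable.tsum_le_tsum_of_inj some (Option.some_injective X) (fun c _ => norm_nonneg _)
    (fun t => le_refl _) ((l1_summable a).comp_injective (Option.some_injective X))
    (l1_summable a)

def restrCLM : L1 (Option X) →L[ℂ] L1 X :=
  LinearMap.mkContinuous
    { toFun := restr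
      map_add' := fun a b => lp.ext (funext fun t => by
        simp only [restr_apply, lp.coeFn_add, Pi.add_apply, restr_apply])
      map_smul' := fun c a => lp.ext (funext fun t => by
        simp only [restr_apply, lp.coeFn_smul, Pi.smul_apply, RingHom.id_apply]) }
    1 fun a => by simpa using norm_restr_le a

lemma restrCLM_apply (a : L1 (Option X)) (t : X) : restrCLM a t = a (some t) := rfl

lemma jsupp (c : L1 X) : ∀ s : Option X, s ∉ Set.range (some : X → Option X) →
    Option.elim s 0 (fun t => c t) = 0 := by
  rintro (_ | t) hs
  · rfl
  · exact absurd ⟨t, rfl⟩ hs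

lemma jsummable (c : L1 X) : Summable fun s : Option X => ‖Option.elim s 0 (fun t => c t)‖ := by
  rw [← Function.Injective.summable_iff (Option.some_injective X)
    (f := fun s : Option X => ‖Option.elim s 0 (fun t => c t)‖) ?_]
  · exact l1_summable c
  · intro s hs
    show ‖Option.elim s 0 (fun t => (c : X → ℂ) t)‖ = 0
    rw [jsupp c s hs, norm_zero]

def jmap (c : L1 X) : L1 (Option X) :=
  ⟨fun s => Option.elim s 0 (fun t => c t), memℓp_of_summable (jsummable c)⟩

lemma jmap_some (c : L1 X) (t : X) : jmap c (some t) = c t := rfl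

lemma jmap_none (c : L1 X) : jmap c none = 0 := rfl

lemma tsum_jmap (c : L1 X) : ∑' s, jmap c s = ∑' t, c t := by
  refine (Function.Injective.tsum_eq (Option.some_injective X)
    (f := fun s => jmap c s) (supp_sub ?_)).symm
  intro s hs
  exact jsupp c s hs

lemma norm_jmap (c : L1 X) : ‖jmap c‖ ≤ ‖c‖ := by
  rw [l1_norm, l1_norm]
  refine le_of_eq (Function.Injective.tsum_eq (Option.some_injective X)
    (f := fun s => ‖jmap c s‖) (supp_sub ?_)).symm
  intro s hs
  rw [show jmap c s = 0 from jsupp c s hs, norm_zero]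

def jCLM : L1 X →L[ℂ] L1 (Option X) :=
  LinearMap.mkContinuous
    { toFun := jmap
      map_add' := fun a b => lp.ext (funext fun s => by
        rcases s with _ | t
        · simp only [jmap_none, lp.coeFn_add, Pi.add_apply, jmap_none, add_zero]
        · simp only [jmap_some, lp.coeFn_add, Pi.add_apply, jmap_some])
      map_smul' := fun k a => lp.ext (funext fun s => by
        rcases s with _ | t
        · simp only [jmap_none, lp.coeFn_smul, Pi.smul_apply, RingHom.id_apply, smul_zero]
        · simp only [jmap_some, lp.coeFn_smul, Pi.smul_apply, RingHom.id_apply]) }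
    1 fun c => by simpa using norm_jmap c

lemma jCLM_apply (c : L1 X) : (jCLM c : L1 (Option X)) = jmap c := rfl

lemma tsum_option (a : L1 (Option X)) : ∑' s, a s = a none + ∑' t, a (some t) := by
  classical
  rw [(l1_summable' a).tsum_eq_add_tsum_ite none]
  congr 1
  refine (Function.Injective.tsum_eq (Option.some_injective X)
    (f := fun s => if s = none then 0 else a s) (supp_sub ?_)).symm.trans ?_
  · intro s hs
    rcases s with _ | t
    · exact if_pos rfl
    · exact absurd ⟨t, rfl⟩ hs
  · exact tsum_congr fun t => if_neg (Option.some_ne_none t)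


def ECLM : L1 (Option X) →L[ℂ] L1 X × ℂ := restrCLM.prod phiCLM

def FCLM : (L1 X × ℂ) →L[ℂ] L1 (Option X) :=
  jCLM.comp (ContinuousLinearMap.fst ℂ (L1 X) ℂ) +
    ((ContinuousLinearMap.snd ℂ (L1 X) ℂ) -
      phiCLM.comp (ContinuousLinearMap.fst ℂ (L1 X) ℂ)).smulRight (delta none)

lemma FCLM_eq (c : L1 X) (t : ℂ) :
    FCLM (c, t) = jCLM c + (t - phiCLM c) • (delta (none : Option X)) := by
  rfl

lemma left_inv (a : L1 (Option X)) : FCLM (ECLM a) = a := by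
  have hE : ECLM a = (restrCLM a, phiCLM a) := rfl
  rw [hE, FCLM_eq]
  apply lp.ext
  funext s
  simp only [lp.coeFn_add, Pi.add_apply, lp.coeFn_smul, Pi.smul_apply, smul_eq_mul,
    jCLM_apply, delta_apply]
  rcases s with _ | t
  · rw [jmap_none]
    simp only [if_true]
    have h1 : phiCLM a = (a : Option X → ℂ) none + ∑' t, a (some t) := by
      rw [phiCLM_apply]
      exact tsum_option a
    have h2 : phiCLM (restrCLM a) = ∑' t, a (some t) := by
      rw [phiCLM_apply]
      exact tsum_congr fun t => rfl
    rw [h1, h2]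
    ring
  · rw [jmap_some]
    simp only [restrCLM_apply, reduceCtorEq, if_false, mul_zero, add_zero]

lemma right_inv (z : L1 X × ℂ) : ECLM (FCLM z) = z := by
  obtain ⟨c, t⟩ := z
  have hE : ∀ x : L1 (Option X), ECLM x = (restrCLM x, phiCLM x) := fun _ => rfl
  rw [FCLM_eq, hE]
  have h1 : restrCLM (jCLM c + (t - phiCLM c) • (delta (none : Option X))) = c := by
    apply lp.ext
    funext t'
    simp only [restrCLM_apply, lp.coeFn_add, Pi.add_apply, lp.coeFn_smul, Pi.smul_apply,
      smul_eq_mul, jCLM_apply, delta_apply, reduceCtorEq, if_false, mul_zero, add_zero]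
    rfl
  have h2 : phiCLM (jCLM c + (t - phiCLM c) • (delta (none : Option X))) = t := by
    rw [map_add, map_smul]
    have ha : phiCLM (jCLM c : L1 (Option X)) = phiCLM c := by
      rw [phiCLM_apply, phiCLM_apply]
      exact tsum_jmap c
    have hb : phiCLM (delta (none : Option X)) = 1 := by
      rw [phiCLM_apply]
      exact tsum_delta none
    rw [ha, hb, smul_eq_mul]
    ring
  rw [h1, h2]

def eOpt : L1 (Option X) ≃L[ℂ] (L1 X × ℂ) :=
  ContinuousLinearEquiv.equivOfInverse ECLM FCLM left_inv right_inv

lemma eOpt_apply (a : L1 (Option X)) : eOpt a = (restrCLM a, phiCLM a) := rfl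


section BrandtSpecific

variable (I G : Type) [Mul G]

def muT : (I × G × I) → (I × G × I) → Option (I × G × I) :=
  fun u v => ((some u * some v : Brandt I G))

def muS : Brandt I G → Brandt I G → Option (Brandt I G) := fun s t => some (s * t)

variable {I G}

lemma mul_some (i i' : I) (g g' : G) (j j' : I) :
    (some (i, g, j) * some (i', g', j') : Brandt I G) =
      if j = i' then some (i, g * g', j') else none := rfl

lemma none_mul (s : Brandt I G) : (none * s : Brandt I G) = none := by
  rcases s with _ | ⟨i, g, j⟩ <;> rfl

lemma mul_none (s : Brandt I G) : (s * none : Brandt I G) = none := by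
  rcases s with _ | ⟨i, g, j⟩ <;> rfl

end BrandtSpecific

end BrandtAux


open BrandtAux in
/-- For the Brandt semigroup `S = B(I,G)` and `T = I×G×I`, the
Banach algebra `ℓ¹(S)` is topologically isomorphic to the Banach algebra
`ℓ¹(T) ⊕ ℂ` with coordinatewise multiplication. -/
theorem brandt_morita_stmt8 (I G : Type) [Nonempty I] [Group G] :
    ∃ (mulT : L1 (I × G × I) →L[ℂ] L1 (I × G × I) →L[ℂ] L1 (I × G × I))
      (mulS : L1 (Brandt I G) →L[ℂ] L1 (Brandt I G) →L[ℂ] L1 (Brandt I G)),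
      (∀ (a b : L1 (I × G × I)) (i : I) (g : G) (j : I),
        mulT a b (i, g, j) = ∑' p : I × G, a (i, g * p.2⁻¹, p.1) * b (p.1, p.2, j)) ∧
      (∀ (a b : L1 (Brandt I G)) (s : Brandt I G), mulS a b s = l1conv a b s) ∧
      ∃ e : L1 (Brandt I G) ≃L[ℂ] (L1 (I × G × I) × ℂ),
        ∀ a b : L1 (Brandt I G),
          e (mulS a b) = (mulT (e a).1 (e b).1, (e a).2 * (e b).2) := by
  classical
  refine ⟨convCLM (muT I G), convCLM (muS I G), ?_, ?_, ⟨eOpt, ?_⟩⟩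
  · -- formula for mulT
    intro a b i g j
    have : convCLM (muT I G) a b (i, g, j) = cf (muT I G) a b (i, g, j) := rfl
    rw [this]
    exact cf_reindex (muT I G) a b (i, g, j)
      (fun p : I × G => (((i, g * p.2⁻¹, p.1) : I × G × I), ((p.1, p.2, j) : I × G × I)))
      (by
        intro p q h
        simp only [Prod.mk.injEq] at h
        exact Prod.ext h.2.1 h.2.2.1)
      (by
        rintro ⟨k, h⟩
        show muT I G (i, g * h⁻¹, k) (k, h, j) = some (i, g, j)
        rw [muT, mul_some, if_pos rfl, inv_mul_cancel_right])
      (by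
        rintro ⟨⟨i₁, g₁, j₁⟩, ⟨i₂, g₂, j₂⟩⟩ hp
        rw [muT, mul_some] at hp
        by_cases hji : j₁ = i₂
        · rw [if_pos hji] at hp
          simp only [Option.some_inj, Prod.mk.injEq] at hp
          obtain ⟨h1, h2, h3⟩ := hp
          refine ⟨(i₂, g₂), ?_⟩
          simp only [Prod.mk.injEq]
          refine ⟨⟨h1.symm, ?_, hji.symm⟩, trivial, trivial, h3.symm⟩
          rw [← h2, mul_inv_cancel_right]
        · rw [if_neg hji] at hp
          exact absurd hp (by simp))
  · -- formula for mulS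
    intro a b s
    have : convCLM (muS I G) a b s = cf (muS I G) a b s := rfl
    rw [this, cf, l1conv]
    exact tsum_congr fun p => by simp only [muS, Option.some_inj]
  · -- multiplicativity of e
    intro a b
    have hE : ∀ x : L1 (Brandt I G), eOpt x = (restrCLM x, phiCLM x) := fun _ => rfl
    rw [hE, hE, hE]
    refine Prod.ext ?_ ?_
    · -- restriction is multiplicative
      show restrCLM (convCLM (muS I G) a b) = convCLM (muT I G) (restrCLM a) (restrCLM b)
      apply lp.ext
      funext t
      show cf (muS I G) a b (some t) = cf (muT I G) (restrCLM a) (restrCLM b) t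
      rw [cf_reindex' (muS I G) a b (some t)
        (fun q : (I × G × I) × (I × G × I) => ((some q.1 : Brandt I G), (some q.2 : Brandt I G)))
        (by
          intro p q h
          simp only [Prod.mk.injEq, Option.some_inj] at h
          exact Prod.ext h.1 h.2)
        (by
          rintro ⟨p1, p2⟩ hp
          rw [muS] at hp
          simp only [Option.some_inj] at hp
          rcases p1 with _ | u
          · rw [none_mul] at hp
            exact absurd hp (by simp)
          · rcases p2 with _ | v
            · rw [mul_none] at hp
              exact absurd hp (by simp)
            · exact ⟨(u, v), rfl⟩)]
      rw [cf]
      refine tsum_congr fun q => ?_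
      simp only [muS, muT, Option.some_inj, restrCLM_apply]
      congr
    · -- augmentation is multiplicative
      show phiCLM (convCLM (muS I G) a b) = phiCLM a * phiCLM b
      rw [phiCLM_apply, phiCLM_apply, phiCLM_apply]
      exact tsum_cf (muS I G) (fun p => p.1 * p.2) (fun p => rfl) a b
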